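/- Let a, b ∈ ℝⁿ with a ⪰ b (a majorizes b). Then there exist m ∈ ℕ and a finite chain of vectors a = v₀, v₁, …, v_m = b such that each v_{t+1} is obtained from v_t by a T-transform: there exist indices i ≠ j and λ ∈ [0,1] with v_{t+1} i = λ·(v_t i) + (1−λ)·(v_t j), v_{t+1} j = λ·(v_t j) + (1−λ)·(v_t i), and v_{t+1} l = v_t l for all l ∉ {i, j}. -/

import Mathlib

noncomputable section

/-- The sum of the `k` largest entries of `x`, i.e. the maximum of `∑ i ∈ S, x i`
over all subsets `S` of cardinality `k`. -/
def topKSum {n : ℕ} (x : Fin n → ℝ) (k : ℕ) : ℝ :=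
  sSup ((fun S : Finset (Fin n) => ∑ i ∈ S, x i) '' {S | S.card = k})

/-- `a` majorizes `b`: for every `k = 1, …, n` the sum of the `k` largest entries of
`a` is at least that of `b`, and the total sums agree. -/
def Majorizes {n : ℕ} (a b : Fin n → ℝ) : Prop :=
  (∀ k, 1 ≤ k → k ≤ n → topKSum b k ≤ topKSum a k) ∧ ∑ i, a i = ∑ i, b i

/-- `y` is obtained from `x` by a T-transform: two coordinates are replaced by
convex combinations `λ x_i + (1-λ) x_j` and `λ x_j + (1-λ) x_i`, the others kept. -/
def IsTTransform {n : ℕ} (x y : Fin n → ℝ) : Prop :=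
  ∃ (i j : Fin n) (lam : ℝ), i ≠ j ∧ 0 ≤ lam ∧ lam ≤ 1 ∧
    y i = lam * x i + (1 - lam) * x j ∧
    y j = lam * x j + (1 - lam) * x i ∧
    ∀ l : Fin n, l ≠ i → l ≠ j → y l = x l

/-- Auxiliary: `y` is reachable from `x` by a finite chain of T-transforms. -/
def TChain {n : ℕ} (x y : Fin n → ℝ) : Prop :=
  ∃ (m : ℕ) (v : ℕ → Fin n → ℝ), v 0 = x ∧ v m = y ∧
    ∀ t < m, IsTTransform (v t) (v (t + 1))

lemma tchain_refl {n : ℕ} (x : Fin n → ℝ) : TChain x x :=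
  ⟨0, fun _ => x, rfl, rfl, fun t ht => absurd ht (by omega)⟩

lemma tchain_single {n : ℕ} {x y : Fin n → ℝ} (h : IsTTransform x y) : TChain x y := by
  refine ⟨1, fun t => if t = 0 then x else y, by simp, by simp, ?_⟩
  intro t ht
  have ht0 : t = 0 := by omega
  subst ht0; simpa using h

lemma tchain_trans {n : ℕ} {x y z : Fin n → ℝ} (h1 : TChain x y) (h2 : TChain y z) :
    TChain x z := by
  obtain ⟨m1, u, hu0, hum, hustep⟩ := h1
  obtain ⟨m2, w, hw0, hwm, hwstep⟩ := h2
  refine ⟨m1 + m2, fun t => if t < m1 then u t else w (t - m1), ?_, ?_, ?_⟩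
  · by_cases h : 0 < m1
    · simp [h, hu0]
    · have : m1 = 0 := by omega
      subst this
      simp only [Nat.lt_irrefl, if_neg, Nat.sub_zero]
      simp only [Nat.not_lt_zero, if_false]
      rw [hw0, ← hum, hu0]
  · have : ¬ (m1 + m2 < m1) := by omega
    simp only [this, if_false]
    rw [Nat.add_sub_cancel_left, hwm]
  · intro t ht
    by_cases h1' : t + 1 < m1
    · have h0 : t < m1 := by omega
      simp only [h0, h1', if_true]
      exact hustep t h0
    · by_cases h0 : t < m1
      · -- t + 1 = m1
        have he : t + 1 = m1 := by omega
        simp only [h0, if_true, h1', if_false]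
        have : w (t + 1 - m1) = u (t + 1) := by
          rw [he, Nat.sub_self, hw0, ← hum]
        rw [this]
        exact hustep t h0
      · simp only [h0, h1', if_false]
        have ht2 : t - m1 < m2 := by omega
        have : t + 1 - m1 = (t - m1) + 1 := by omega
        rw [this]
        exact hwstep _ ht2

lemma isTTransform_swap {n : ℕ} (x : Fin n → ℝ) {i j : Fin n} (hij : i ≠ j) :
    IsTTransform x (x ∘ Equiv.swap i j) := by
  refine ⟨i, j, 0, hij, le_refl _, zero_le_one, ?_, ?_, ?_⟩
  · simp [Equiv.swap_apply_left]
  · simp [Equiv.swap_apply_right]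
  · intro l hli hlj
    simp [Equiv.swap_apply_of_ne_of_ne hli hlj]

lemma tchain_comp_perm {n : ℕ} (σ : Equiv.Perm (Fin n)) (x : Fin n → ℝ) :
    TChain x (x ∘ σ) := by
  refine Equiv.Perm.swap_induction_on
    (motive := fun σ : Equiv.Perm (Fin n) => ∀ x : Fin n → ℝ, TChain x (x ∘ σ)) σ
    (fun x => by simpa using tchain_refl x) ?_ x
  intro σ' i j hij ih x
  have key : x ∘ ⇑(Equiv.swap i j * σ') = (x ∘ Equiv.swap i j) ∘ σ' := by
    funext l; simp [Equiv.Perm.mul_apply, Function.comp]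
  rw [key]
  exact tchain_trans (tchain_single (isTTransform_swap x hij)) (ih _)

/-- prefix sum of the first `k` coordinates -/
def pfx {n : ℕ} (x : Fin n → ℝ) (k : ℕ) : ℝ :=
  ∑ i ∈ Finset.univ.filter (fun i : Fin n => i.val < k), x i

lemma le_topKSum {n : ℕ} (x : Fin n → ℝ) {S : Finset (Fin n)} {k : ℕ} (h : S.card = k) :
    ∑ i ∈ S, x i ≤ topKSum x k :=
  le_csSup (Set.toFinite _).bddAbove ⟨S, h, rfl⟩

lemma topKSum_exists {n : ℕ} (x : Fin n → ℝ) {k : ℕ} (hk : k ≤ n) :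
    ∃ S : Finset (Fin n), S.card = k ∧ topKSum x k = ∑ i ∈ S, x i := by
  obtain ⟨T, -, hT⟩ := Finset.exists_subset_card_eq (s := (Finset.univ : Finset (Fin n))) (n := k)
    (by simpa using hk)
  have hne : ((fun S : Finset (Fin n) => ∑ i ∈ S, x i) '' {S | S.card = k}).Nonempty :=
    ⟨_, T, hT, rfl⟩
  obtain ⟨S, hS, hval⟩ := hne.csSup_mem (Set.toFinite _)
  exact ⟨S, hS, hval.symm⟩

lemma topKSum_comp_perm {n : ℕ} (x : Fin n → ℝ) (σ : Equiv.Perm (Fin n)) (k : ℕ) :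
    topKSum (x ∘ σ) k = topKSum x k := by
  unfold topKSum
  congr 1
  ext r
  constructor
  · rintro ⟨S, hS, rfl⟩
    refine ⟨S.image σ, ?_, ?_⟩
    · simpa [Finset.card_image_of_injective _ σ.injective] using hS
    · show ∑ i ∈ S.image σ, x i = ∑ i ∈ S, (x ∘ σ) i
      rw [Finset.sum_image (fun a _ b _ h => σ.injective h)]
      rfl
  · rintro ⟨S, hS, rfl⟩
    refine ⟨S.image σ.symm, ?_, ?_⟩
    · simpa [Finset.card_image_of_injective _ σ.symm.injective] using hS
    · show ∑ i ∈ S.image σ.symm, (x ∘ σ) i = ∑ i ∈ S, x i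
      rw [Finset.sum_image (fun a _ b _ h => σ.symm.injective h)]
      simp [Function.comp]

lemma strictMono_fin_le {n k : ℕ} {f : Fin k → Fin n} (hf : StrictMono f) (m : Fin k) :
    (m : ℕ) ≤ (f m : ℕ) := by
  have himg : (Finset.Iio m).image f ⊆ Finset.Iio (f m) := by
    intro y hy
    obtain ⟨z, hz, rfl⟩ := Finset.mem_image.mp hy
    exact Finset.mem_Iio.mpr (hf (Finset.mem_Iio.mp hz))
  have := Finset.card_le_card himg
  rwa [Finset.card_image_of_injective _ hf.injective, Fin.card_Iio, Fin.card_Iio] at this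

lemma sum_le_pfx {n : ℕ} {x : Fin n → ℝ} (hx : Antitone x) {S : Finset (Fin n)} {k : ℕ}
    (hS : S.card = k) (hk : k ≤ n) : ∑ i ∈ S, x i ≤ pfx x k := by
  set f := S.orderEmbOfFin hS with hf
  have himg : Finset.image f Finset.univ = S := by
    apply Finset.coe_injective
    rw [Finset.coe_image, Finset.coe_univ, Set.image_univ]
    exact Finset.range_orderEmbOfFin S hS
  have h1 : ∑ i ∈ S, x i = ∑ m : Fin k, x (f m) := by
    rw [← himg, Finset.sum_image (fun a _ b _ h => f.injective h)]
  have himg2 : Finset.image (Fin.castLE hk) Finset.univ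
      = Finset.univ.filter (fun i : Fin n => i.val < k) := by
    ext i
    simp only [Finset.mem_image, Finset.mem_univ, true_and, Finset.mem_filter]
    constructor
    · rintro ⟨m, rfl⟩; exact m.2
    · intro hi; exact ⟨⟨i.val, hi⟩, rfl⟩
  have h2 : pfx x k = ∑ m : Fin k, x (Fin.castLE hk m) := by
    rw [pfx, ← himg2, Finset.sum_image (fun a _ b _ h => (Fin.castLE_injective hk) h)]
  rw [h1, h2]
  apply Finset.sum_le_sum
  intro m _
  apply hx
  have := strictMono_fin_le f.strictMono m
  exact Fin.le_def.mpr (by simpa using this)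

lemma card_filter_lt {n k : ℕ} (hk : k ≤ n) :
    (Finset.univ.filter (fun i : Fin n => i.val < k)).card = k := by
  have himg2 : Finset.image (Fin.castLE hk) Finset.univ
      = Finset.univ.filter (fun i : Fin n => i.val < k) := by
    ext i
    simp only [Finset.mem_image, Finset.mem_univ, true_and, Finset.mem_filter]
    constructor
    · rintro ⟨m, rfl⟩; exact m.2
    · intro hi; exact ⟨⟨i.val, hi⟩, rfl⟩
  rw [← himg2, Finset.card_image_of_injective _ (Fin.castLE_injective hk)]
  simp

lemma topKSum_antitone {n : ℕ} {x : Fin n → ℝ} (hx : Antitone x) {k : ℕ} (hk : k ≤ n) :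
    topKSum x k = pfx x k := by
  apply le_antisymm
  · obtain ⟨S, hS, hval⟩ := topKSum_exists x hk
    rw [hval]
    exact sum_le_pfx hx hS hk
  · exact le_topKSum x (card_filter_lt hk)

lemma sorted_chain {n : ℕ} : ∀ d : ℕ, ∀ v b : Fin n → ℝ, Antitone v → Antitone b →
    (∀ m ≤ n, pfx b m ≤ pfx v m) → (∑ i, v i = ∑ i, b i) →
    (Finset.univ.filter (fun l => v l ≠ b l)).card ≤ d → TChain v b := by
  intro d
  induction d with
  | zero =>
    intro v b _ _ _ _ hcard
    have hemp : (Finset.univ.filter (fun l => v l ≠ b l)) = ∅ :=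
      Finset.card_eq_zero.mp (Nat.le_zero.mp hcard)
    have : v = b := by
      funext l
      by_contra h
      have : l ∈ Finset.univ.filter (fun l => v l ≠ b l) := by
        simp [h]
      simp [hemp] at this
    exact this ▸ tchain_refl v
  | succ d ih =>
    intro v b hv hb hpfx hsum hcard
    by_cases hvb : ∀ l, v l = b l
    · exact (funext hvb : v = b) ▸ tchain_refl v
    push_neg at hvb
    -- the set of indices where v exceeds b is nonempty
    have hPne : (Finset.univ.filter (fun l => b l < v l)).Nonempty := by
      by_contra hP
      rw [Finset.not_nonempty_iff_eq_empty] at hP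
      have hle : ∀ l ∈ Finset.univ, v l ≤ b l := by
        intro l _
        by_contra h
        have : l ∈ Finset.univ.filter (fun l => b l < v l) := by
          simp [lt_of_not_ge h]
        simp [hP] at this
      obtain ⟨l, hl⟩ := hvb
      exact hl ((Finset.sum_eq_sum_iff_of_le hle).mp hsum l (Finset.mem_univ l))
    set j := (Finset.univ.filter (fun l => b l < v l)).max' hPne with hjdef
    have hj : b j < v j := by
      have := (Finset.univ.filter (fun l => b l < v l)).max'_mem hPne
      exact (Finset.mem_filter.mp this).2
    have hjmax : ∀ l, b l < v l → l ≤ j := by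
      intro l hl
      exact Finset.le_max' _ l (by simp [hl])
    -- there is an index beyond j where v is below b
    have hKne : (Finset.univ.filter (fun l => j < l ∧ v l < b l)).Nonempty := by
      by_contra hK
      rw [Finset.not_nonempty_iff_eq_empty] at hK
      have heq : ∀ l, j < l → v l = b l := by
        intro l hl
        rcases lt_trichotomy (v l) (b l) with h | h | h
        · exfalso
          have : l ∈ Finset.univ.filter (fun l => j < l ∧ v l < b l) := by
            simp [hl, h]
          simp [hK] at this
        · exact h
        · exact absurd (hjmax l h) (not_le.mpr hl)
      have hsplit := Finset.sum_filter_add_sum_filter_not Finset.univ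
        (fun l : Fin n => (l : ℕ) < (j : ℕ)) (fun l => v l - b l)
      have h1 : 0 ≤ ∑ l ∈ Finset.univ.filter (fun l : Fin n => (l : ℕ) < (j : ℕ)),
          (v l - b l) := by
        have := hpfx (j : ℕ) (le_of_lt j.2)
        rw [Finset.sum_sub_distrib]
        rw [pfx, pfx] at this
        linarith
      have h2 : ∑ l ∈ Finset.univ.filter (fun l : Fin n => ¬ (l : ℕ) < (j : ℕ)),
          (v l - b l) = v j - b j := by
        apply Finset.sum_eq_single_of_mem
        · simp
        · intro l hl hne
          have hjl : j < l := by
            have := (Finset.mem_filter.mp hl).2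
            rw [Fin.lt_def]
            rcases Nat.lt_or_ge (j : ℕ) (l : ℕ) with h | h
            · exact h
            · exfalso
              exact hne (Fin.val_injective (by omega))
          rw [heq l hjl]; ring
      have hzero : ∑ l : Fin n, (v l - b l) = 0 := by
        rw [Finset.sum_sub_distrib, hsum]; ring
      rw [h2, hzero] at hsplit
      linarith
    set c := (Finset.univ.filter (fun l => j < l ∧ v l < b l)).min' hKne with hcdef
    have hc1 : j < c ∧ v c < b c := by
      have := (Finset.univ.filter (fun l => j < l ∧ v l < b l)).min'_mem hKne
      exact (Finset.mem_filter.mp this).2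
    have hmid : ∀ l, j < l → l < c → v l = b l := by
      intro l h1 h2
      rcases lt_trichotomy (v l) (b l) with h | h | h
      · exfalso
        have : c ≤ l := Finset.min'_le _ l (by simp [h1, h])
        exact absurd h2 (not_lt.mpr this)
      · exact h
      · exact absurd (hjmax l h) (not_le.mpr h1)
    have hbjc : b c ≤ b j := hb (le_of_lt hc1.1)
    set δ := min (v j - b j) (b c - v c) with hδdef
    have hδ1 : δ ≤ v j - b j := min_le_left _ _
    have hδ2 : δ ≤ b c - v c := min_le_right _ _
    have hδpos : 0 < δ := lt_min (by linarith) (by linarith)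
    have hδle : δ ≤ v j - v c := by linarith
    have hvjc : v c < v j := by linarith
    have hjc : j ≠ c := ne_of_lt hc1.1
    set v' := Function.update (Function.update v j (v j - δ)) c (v c + δ) with hv'def
    have hv'j : v' j = v j - δ := by
      rw [hv'def, Function.update_of_ne hjc, Function.update_self]
    have hv'c : v' c = v c + δ := by rw [hv'def, Function.update_self]
    have hv'l : ∀ l, l ≠ j → l ≠ c → v' l = v l := by
      intro l h1 h2
      rw [hv'def, Function.update_of_ne h2, Function.update_of_ne h1]
    have hD : v j - v c ≠ 0 := ne_of_gt (by linarith)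
    -- the transfer is a T-transform
    have hstep : IsTTransform v v' := by
      refine ⟨j, c, 1 - δ / (v j - v c), hjc, ?_, ?_, ?_, ?_, fun l h1 h2 => hv'l l h1 h2⟩
      · have : δ / (v j - v c) ≤ 1 := (div_le_one (by linarith)).mpr hδle
        linarith
      · have : 0 ≤ δ / (v j - v c) := div_nonneg hδpos.le (by linarith)
        linarith
      · rw [hv'j]
        have : (1 - δ / (v j - v c)) * v j + (1 - (1 - δ / (v j - v c))) * v c
            = v j - (δ / (v j - v c)) * (v j - v c) := by ring
        rw [this, div_mul_cancel₀ _ hD]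
      · rw [hv'c]
        have : (1 - δ / (v j - v c)) * v c + (1 - (1 - δ / (v j - v c))) * v j
            = v c + (δ / (v j - v c)) * (v j - v c) := by ring
        rw [this, div_mul_cancel₀ _ hD]
    -- key bounds
    have hbj_le : b j ≤ v' j := by rw [hv'j]; linarith
    have hv'c_le : v' c ≤ b c := by rw [hv'c]; linarith
    have hnotP : ∀ l, j < l → v l ≤ b l := by
      intro l hl
      by_contra h
      exact absurd (hjmax l (lt_of_not_ge h)) (not_le.mpr hl)
    have hC1 : ∀ l, j < l → v' l ≤ b j := by
      intro l hl
      by_cases hlc : l = c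
      · subst hlc; exact le_trans hv'c_le hbjc
      · rw [hv'l l (ne_of_gt hl) hlc]
        exact le_trans (hnotP l hl) (hb hl.le)
    have hC2 : ∀ l, l < c → b c ≤ v' l := by
      intro l hl
      by_cases hlj : l = j
      · subst hlj; exact le_trans hbjc hbj_le
      · rw [hv'l l hlj (ne_of_lt hl)]
        rcases lt_or_ge j l with h | h
        · rw [hmid l h hl]; exact hb hl.le
        · have := hv h
          linarith
    -- v' is still antitone
    have hv'anti : Antitone v' := by
      intro p q hpq
      rcases eq_or_lt_of_le hpq with rfl | hpq
      · exact le_refl _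
      by_cases hpj : p = j
      · subst hpj
        by_cases hqc : q = c
        · subst hqc; exact le_trans hv'c_le (le_trans hbjc hbj_le)
        · exact le_trans (hC1 q hpq) hbj_le
      · by_cases hpc : p = c
        · subst hpc
          have hqj : q ≠ j := ne_of_gt (lt_trans hc1.1 hpq)
          rw [hv'l q hqj (ne_of_gt hpq), hv'c]
          have : v q ≤ v c := hv hpq.le
          linarith
        · by_cases hqc : q = c
          · subst hqc
            exact le_trans hv'c_le (hC2 p hpq)
          · by_cases hqj : q = j
            · subst hqj
              rw [hv'j, hv'l p hpj hpc]
              have : v j ≤ v p := hv hpq.le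
              linarith
            · rw [hv'l p hpj hpc, hv'l q hqj hqc]
              exact hv hpq.le
    -- sum of the differences over any finset
    have hsum2 : ∀ S : Finset (Fin n), ∑ l ∈ S, (v' l - v l)
        = (if j ∈ S then -δ else 0) + (if c ∈ S then δ else 0) := by
      intro S
      have hfun : ∀ l, v' l - v l
          = (if l = j then -δ else 0) + (if l = c then δ else 0) := by
        intro l
        by_cases h1 : l = j
        · subst h1
          rw [hv'j]
          simp [hjc]
        · by_cases h2 : l = c
          · subst h2
            rw [hv'c]
            simp [h1]
          · rw [hv'l l h1 h2]
            simp [h1, h2]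
      rw [Finset.sum_congr rfl (fun l _ => hfun l), Finset.sum_add_distrib,
        Finset.sum_ite_eq' S j (fun _ => -δ), Finset.sum_ite_eq' S c (fun _ => δ)]
    -- total sums agree
    have hsum' : ∑ i, v' i = ∑ i, b i := by
      have h0 := hsum2 Finset.univ
      simp only [Finset.mem_univ, if_true] at h0
      rw [Finset.sum_sub_distrib] at h0
      linarith
    -- prefix inequalities still hold
    have hpfx' : ∀ m ≤ n, pfx b m ≤ pfx v' m := by
      intro m hm
      have hbase := hpfx m hm
      have hdiff : pfx v' m - pfx v m
          = ∑ l ∈ Finset.univ.filter (fun l : Fin n => (l : ℕ) < m), (v' l - v l) := by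
        rw [pfx, pfx, ← Finset.sum_sub_distrib]
      rw [hsum2] at hdiff
      by_cases h1 : (j : ℕ) < m
      · by_cases h2 : (c : ℕ) < m
        · have e1 : j ∈ Finset.univ.filter (fun l : Fin n => (l : ℕ) < m) := by simp [h1]
          have e2 : c ∈ Finset.univ.filter (fun l : Fin n => (l : ℕ) < m) := by simp [h2]
          rw [if_pos e1, if_pos e2] at hdiff
          linarith
        · -- j in, c out: prefix of v' loses δ, but v had slack ≥ δ here
          have e1 : j ∈ Finset.univ.filter (fun l : Fin n => (l : ℕ) < m) := by simp [h1]
          have e2 : c ∉ Finset.univ.filter (fun l : Fin n => (l : ℕ) < m) := by simp [h2]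
          rw [if_pos e1, if_neg e2] at hdiff
          have key : δ ≤ pfx v m - pfx b m := by
            rw [pfx, pfx, ← Finset.sum_sub_distrib]
            have hsplit := Finset.sum_filter_add_sum_filter_not
              (Finset.univ.filter (fun l : Fin n => (l : ℕ) < m))
              (fun l : Fin n => (l : ℕ) < (j : ℕ)) (fun l => v l - b l)
            have hA : (Finset.univ.filter (fun l : Fin n => (l : ℕ) < m)).filter
                (fun l : Fin n => (l : ℕ) < (j : ℕ))
                = Finset.univ.filter (fun l : Fin n => (l : ℕ) < (j : ℕ)) := by
              ext l
              simp only [Finset.mem_filter, Finset.mem_univ, true_and]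
              omega
            have hA0 : 0 ≤ ∑ l ∈ Finset.univ.filter (fun l : Fin n => (l : ℕ) < (j : ℕ)),
                (v l - b l) := by
              have := hpfx (j : ℕ) (le_of_lt j.2)
              rw [pfx, pfx] at this
              rw [Finset.sum_sub_distrib]
              linarith
            have hB : ∑ l ∈ (Finset.univ.filter (fun l : Fin n => (l : ℕ) < m)).filter
                (fun l : Fin n => ¬ (l : ℕ) < (j : ℕ)), (v l - b l) = v j - b j := by
              apply Finset.sum_eq_single_of_mem
              · simp [h1]
              · intro l hl hne
                simp only [Finset.mem_filter, Finset.mem_univ, true_and] at hl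
                have hjl : j < l := by
                  rw [Fin.lt_def]
                  rcases Nat.lt_or_ge (j : ℕ) (l : ℕ) with h | h
                  · exact h
                  · exact absurd (Fin.val_injective (by omega)) hne
                have hlc : l < c := by
                  rw [Fin.lt_def]
                  omega
                rw [hmid l hjl hlc]; ring
            rw [hA] at hsplit
            rw [hB] at hsplit
            linarith
          rw [pfx, pfx] at key hbase hdiff ⊢
          linarith
      · have h2 : ¬ (c : ℕ) < m := by
          have : (j : ℕ) < (c : ℕ) := hc1.1
          omega
        have e1 : j ∉ Finset.univ.filter (fun l : Fin n => (l : ℕ) < m) := by simp [h1]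
        have e2 : c ∉ Finset.univ.filter (fun l : Fin n => (l : ℕ) < m) := by simp [h2]
        rw [if_neg e1, if_neg e2] at hdiff
        linarith
    -- the set of differing coordinates strictly shrinks
    have hsub : Finset.univ.filter (fun l => v' l ≠ b l)
        ⊆ Finset.univ.filter (fun l => v l ≠ b l) := by
      intro l hl
      simp only [Finset.mem_filter, Finset.mem_univ, true_and] at hl ⊢
      by_cases h1 : l = j
      · subst h1; exact ne_of_gt hj
      · by_cases h2 : l = c
        · subst h2; exact ne_of_lt hc1.2
        · rwa [hv'l l h1 h2] at hl
    have hssub : Finset.univ.filter (fun l => v' l ≠ b l)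
        ⊂ Finset.univ.filter (fun l => v l ≠ b l) := by
      rw [Finset.ssubset_iff_of_subset hsub]
      rcases le_total (v j - b j) (b c - v c) with h | h
      · refine ⟨j, by simp [ne_of_gt hj], ?_⟩
        simp only [Finset.mem_filter, Finset.mem_univ, true_and, not_not]
        rw [hv'j, hδdef, min_eq_left h]; ring
      · refine ⟨c, by simp [ne_of_lt hc1.2], ?_⟩
        simp only [Finset.mem_filter, Finset.mem_univ, true_and, not_not]
        rw [hv'c, hδdef, min_eq_right h]; ring
    have hcard' : (Finset.univ.filter (fun l => v' l ≠ b l)).card ≤ d := by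
      have := Finset.card_lt_card hssub
      omega
    exact tchain_trans (tchain_single hstep) (ih v' b hv'anti hb hpfx' hsum' hcard')

/-- If `a ⪰ b`, then `b` can be derived from `a` by finitely many T-transforms. -/
theorem majorizes_iff_chain_of_Ttransforms
    {n : ℕ} (a b : Fin n → ℝ) (hab : Majorizes a b) :
    ∃ (m : ℕ) (v : ℕ → Fin n → ℝ), v 0 = a ∧ v m = b ∧
      ∀ t < m, IsTTransform (v t) (v (t + 1)) := by
  classical
  set σ := Tuple.sort (fun i => -(a i)) with hσdef
  set τ := Tuple.sort (fun i => -(b i)) with hτdef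
  have has : Antitone (a ∘ σ) := by
    intro p q h
    have := Tuple.monotone_sort (fun i => -(a i)) h
    simpa [Function.comp] using this
  have hbs : Antitone (b ∘ τ) := by
    intro p q h
    have := Tuple.monotone_sort (fun i => -(b i)) h
    simpa [Function.comp] using this
  have hmaj : Majorizes (a ∘ σ) (b ∘ τ) := by
    refine ⟨fun k h1 h2 => ?_, ?_⟩
    · rw [topKSum_comp_perm, topKSum_comp_perm]
      exact hab.1 k h1 h2
    · rw [show ∑ i, (a ∘ σ) i = ∑ i, a i from Equiv.sum_comp σ a,
        show ∑ i, (b ∘ τ) i = ∑ i, b i from Equiv.sum_comp τ b]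
      exact hab.2
  have hpfx : ∀ m ≤ n, pfx (b ∘ τ) m ≤ pfx (a ∘ σ) m := by
    intro m hm
    rcases Nat.eq_zero_or_pos m with rfl | hpos
    · simp [pfx]
    · rw [← topKSum_antitone has hm, ← topKSum_antitone hbs hm]
      exact hmaj.1 m hpos hm
  have h1 : TChain a (a ∘ σ) := tchain_comp_perm σ a
  have h2 : TChain (a ∘ σ) (b ∘ τ) :=
    sorted_chain _ (a ∘ σ) (b ∘ τ) has hbs hpfx hmaj.2 (le_refl _)
  have h3 : TChain (b ∘ τ) b := by
    have h := tchain_comp_perm τ⁻¹ (b ∘ τ)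
    have he : (b ∘ τ) ∘ ⇑τ⁻¹ = b := by funext l; simp
    rwa [he] at h
  exact tchain_trans (tchain_trans h1 h2) h3
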